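/- Let (M,d) be a proper metric space, μ ∈ P₁(M), and suppose μ(B̄(a,ρ)) = α > 1/2 for a closed ball B̄(a,ρ). Let x ∈ M with x ∉ B̄(a,ρ), and suppose there exists z ∈ M such that min over p ∈ B̄(a,ρ) of (d(x,p) − d(z,p)) > ((1−α)/α) d(x,z). Then x is not a Fréchet median of μ. -/

import Mathlib

open MeasureTheory Metric

private lemma integrable_dist_of_integrable_dist
    {M : Type*} [MetricSpace M]
    [MeasurableSpace M] [BorelSpace M]
    (μ : Measure M) [IsProbabilityMeasure μ]
    {x₀ : M} (hmom : Integrable (fun p => dist x₀ p) μ) (x : M) :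
    Integrable (fun p => dist x p) μ := by
  have hb : Integrable (fun p => dist x x₀ + dist x₀ p) μ :=
    (integrable_const _).add hmom
  refine hb.mono' ?_ ?_
  · exact (continuous_const.dist continuous_id).aestronglyMeasurable
  · filter_upwards with p
    rw [Real.norm_eq_abs, abs_of_nonneg dist_nonneg]
    exact dist_triangle x x₀ p

/-- If `μ(B̄(a,ρ)) = α > 1/2` and `x ∉ B̄(a,ρ)` admits a point `z` with
`min_{p ∈ B̄(a,ρ)} (d(x,p) − d(z,p)) > ((1−α)/α) d(x,z)`, then `x` is not a Fréchet
median of `μ`. -/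
theorem not_frechet_median_of_dominating_point
    {M : Type*} [MetricSpace M] [ProperSpace M]
    [MeasurableSpace M] [BorelSpace M]
    (μ : Measure M) [IsProbabilityMeasure μ]
    (x₀ : M) (hmom : Integrable (fun p => dist x₀ p) μ)
    (a : M) (ρ : ℝ) (hρ : 0 < ρ)
    (α : ℝ) (hα : 1 / 2 < α)
    (hmass : μ (closedBall a ρ) = ENNReal.ofReal α)
    (x : M) (hx : x ∉ closedBall a ρ)
    (z : M)
    (hz : ∀ p ∈ closedBall a ρ, ((1 - α) / α) * dist x z < dist x p - dist z p) :
    ¬ (∀ y : M, (∫ p, dist x p ∂μ) ≤ ∫ p, dist y p ∂μ) := by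
  intro h
  have hαpos : (0:ℝ) < α := by linarith
  -- α ≤ 1
  have hα1 : α ≤ 1 := by
    have := prob_le_one (μ := μ) (s := closedBall a ρ)
    rw [hmass] at this
    exact_mod_cast (ENNReal.ofReal_le_one.mp this)
  have hix : Integrable (fun p => dist x p) μ :=
    integrable_dist_of_integrable_dist μ hmom x
  have hiz : Integrable (fun p => dist z p) μ :=
    integrable_dist_of_integrable_dist μ hmom z
  set g : M → ℝ := fun p => dist x p - dist z p with hg
  have hgcont : Continuous g :=
    (continuous_const.dist continuous_id).sub (continuous_const.dist continuous_id)
  have hig : Integrable g μ := hix.sub hiz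
  set B := closedBall a ρ with hB
  have hBmeas : MeasurableSet B := measurableSet_closedBall
  have hBcomp : IsCompact B := isCompact_closedBall a ρ
  have hBne : B.Nonempty := ⟨a, mem_closedBall_self hρ.le⟩
  obtain ⟨p₀, hp₀B, hp₀min⟩ := hBcomp.exists_isMinOn hBne hgcont.continuousOn
  set c' : ℝ := g p₀ with hc'
  have hc'gt : ((1 - α) / α) * dist x z < c' := hz p₀ hp₀B
  -- measures
  have hμB : (μ B).toReal = α := by
    rw [hmass, ENNReal.toReal_ofReal hαpos.le]
  have hμBc : (μ Bᶜ).toReal = 1 - α := by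
    have := measure_compl hBmeas (measure_ne_top μ B)
    rw [this, measure_univ, hmass]
    rw [ENNReal.toReal_sub_of_le (by simpa [hmass] using prob_le_one (μ := μ) (s := B)) (by simp)]
    simp [ENNReal.toReal_ofReal hαpos.le]
  -- lower bound on B
  have h1 : α * c' ≤ ∫ p in B, g p ∂μ := by
    have := setIntegral_mono_on (integrableOn_const (measure_ne_top μ B))
      (hig.integrableOn) hBmeas (fun p hp => hp₀min hp)
    calc α * c' = (μ B).toReal • c' := by rw [hμB, smul_eq_mul]
    _ = ∫ _ in B, c' ∂μ := (setIntegral_const c').symm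
    _ ≤ ∫ p in B, g p ∂μ := this
  -- lower bound on Bᶜ
  have h2 : -((1 - α) * dist x z) ≤ ∫ p in Bᶜ, g p ∂μ := by
    have hpt : ∀ p ∈ Bᶜ, -(dist x z) ≤ g p := by
      intro p _
      have := abs_dist_sub_le x z p
      rw [abs_le] at this
      simpa [hg, dist_comm] using this.1
    have := setIntegral_mono_on (integrableOn_const (measure_ne_top μ Bᶜ))
      (hig.integrableOn) hBmeas.compl hpt
    calc -((1 - α) * dist x z) = (μ Bᶜ).toReal • (-(dist x z)) := by
          rw [hμBc, smul_eq_mul]; ring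
    _ = ∫ _ in Bᶜ, -(dist x z) ∂μ := (setIntegral_const _).symm
    _ ≤ ∫ p in Bᶜ, g p ∂μ := this
  have hsplit : ∫ p, g p ∂μ = (∫ p in B, g p ∂μ) + ∫ p in Bᶜ, g p ∂μ :=
    (integral_add_compl hBmeas hig).symm
  have hgpos : 0 < ∫ p, g p ∂μ := by
    have key : α * (((1 - α) / α) * dist x z) < α * c' :=
      (mul_lt_mul_iff_right₀ hαpos).2 hc'gt
    have : α * (((1 - α) / α) * dist x z) = (1 - α) * dist x z := by
      field_simp
    have key2 : (1 - α) * dist x z < α * c' := by rw [← this]; exact key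
    rw [hsplit]
    linarith [h1, h2, key2]
  have hsub : ∫ p, g p ∂μ = (∫ p, dist x p ∂μ) - ∫ p, dist z p ∂μ :=
    integral_sub hix hiz
  have := h z
  linarith [hgpos, hsub ▸ hgpos]
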